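/- Let X = {x₁,...,x_m} be a Grassmannian frame for R^n at angle α whose frame operator has largest eigenvalue λ₁ with unit eigenvector e₁, and assume λ₁ is maximal among largest eigenvalues of all Grassmannian frames of m vectors for R^n. Then for every x ∈ X, e₁ lies in the span of {x} ∪ {y ∈ X : y ≠ x, |⟨x,y⟩| = α}. -/

import Mathlib

open scoped RealInnerProductSpace
abbrev E (n : ℕ) := EuclideanSpace ℝ (Fin n)
noncomputable def coh {n : ℕ} (X : Set (E n)) : ℝ :=
  sSup {r : ℝ | ∃ x ∈ X, ∃ y ∈ X, x ≠ y ∧ r = |⟪x, y⟫|}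
def IsUnitSet {n : ℕ} (X : Set (E n)) : Prop := ∀ x ∈ X, ‖x‖ = 1
def Isolated {n : ℕ} (X : Set (E n)) (x : E n) : Prop :=
  ∀ y ∈ X, y ≠ x → |⟪x, y⟫| < coh X
def Isolable {n : ℕ} (X : Set (E n)) (x : E n) : Prop :=
  ∀ ε > 0, ∃ x' : E n, ‖x'‖ = 1 ∧ ‖x - x'‖ < ε ∧ ∀ y ∈ X, y ≠ x → |⟪x', y⟫| < coh X
def Grassmannian {n : ℕ} (m : ℕ) (X : Set (E n)) : Prop :=
  IsUnitSet X ∧ X.Finite ∧ X.ncard = m ∧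
    ∀ Y : Set (E n), IsUnitSet Y → Y.Finite → Y.ncard = m → coh X ≤ coh Y

/-! ### Auxiliary lemmas -/

noncomputable def frameOp {n : ℕ} (F : Finset (E n)) : E n →ₗ[ℝ] E n where
  toFun v := ∑ z ∈ F, ⟪z, v⟫ • z
  map_add' u v := by
    simp [inner_add_right, add_smul, Finset.sum_add_distrib]
  map_smul' c v := by
    simp [inner_smul_right, smul_smul, Finset.smul_sum]

lemma frameOp_apply {n : ℕ} (F : Finset (E n)) (v : E n) :
    frameOp F v = ∑ z ∈ F, ⟪z, v⟫ • z := rfl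

lemma frameOp_symm {n : ℕ} (F : Finset (E n)) : (frameOp F).IsSymmetric := by
  intro u v
  simp only [frameOp_apply, sum_inner, inner_sum, real_inner_smul_left, real_inner_smul_right]
  refine Finset.sum_congr rfl fun z _ => ?_
  rw [real_inner_comm z u]; ring

lemma exists_top_eigen {n : ℕ} (hn : 0 < n) (F : Finset (E n)) :
    ∃ (μ : ℝ) (v : E n), v ≠ 0 ∧ (∑ z ∈ F, ⟪z, v⟫ • z = μ • v) ∧
      ∀ w : E n, ⟪∑ z ∈ F, ⟪z, w⟫ • z, w⟫ ≤ μ * ‖w‖ ^ 2 := by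
  have hfr : Module.finrank ℝ (E n) = n := finrank_euclideanSpace_fin
  have hT := frameOp_symm F
  set b := hT.eigenvectorBasis hfr
  set μ := hT.eigenvalues hfr
  have : Nonempty (Fin n) := ⟨⟨0, hn⟩⟩
  obtain ⟨i0, hi0⟩ := Finite.exists_max μ
  refine ⟨μ i0, b i0, ?_, ?_, ?_⟩
  · have := b.orthonormal.1 i0
    intro h; rw [h] at this; simp at this
  · rw [← frameOp_apply]
    have := hT.apply_eigenvectorBasis hfr i0
    exact_mod_cast this
  · intro w
    have hw : ∑ i, ⟪b i, w⟫ • b i = w := by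
      have := b.sum_repr' w
      simpa using this
    have hTw : frameOp F w = ∑ i, (μ i * ⟪b i, w⟫) • b i := by
      conv_lhs => rw [← hw]
      rw [map_sum]
      refine Finset.sum_congr rfl fun i _ => ?_
      rw [map_smul, hT.apply_eigenvectorBasis hfr i, smul_smul, mul_comm]
      rfl
    have h1 : ⟪∑ z ∈ F, ⟪z, w⟫ • z, w⟫ = ∑ i, μ i * ⟪b i, w⟫ ^ 2 := by
      rw [← frameOp_apply, hTw, sum_inner]
      refine Finset.sum_congr rfl fun i _ => ?_
      rw [real_inner_smul_left]; ring
    have h2 : ‖w‖ ^ 2 = ∑ i, ⟪b i, w⟫ ^ 2 := by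
      have := b.sum_inner_mul_inner w w
      rw [← real_inner_self_eq_norm_sq, ← this]
      refine Finset.sum_congr rfl fun i _ => ?_
      rw [real_inner_comm w (b i)]; ring
    rw [h1, h2, Finset.mul_sum]
    refine Finset.sum_le_sum fun i _ => ?_
    nlinarith [hi0 i, sq_nonneg (⟪b i, w⟫)]

lemma pairSet_finite {n : ℕ} {X : Set (E n)} (hfin : X.Finite) :
    {r : ℝ | ∃ x ∈ X, ∃ y ∈ X, x ≠ y ∧ r = |⟪x, y⟫|}.Finite := by
  apply Set.Finite.subset ((hfin.prod hfin).image (fun p => |⟪p.1, p.2⟫|))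
  rintro r ⟨x, hx, y, hy, hxy, rfl⟩
  exact ⟨(x, y), ⟨hx, hy⟩, rfl⟩

lemma pair_le_coh {n : ℕ} {X : Set (E n)} (hfin : X.Finite) {x y : E n}
    (hx : x ∈ X) (hy : y ∈ X) (hxy : x ≠ y) : |⟪x, y⟫| ≤ coh X :=
  le_csSup (pairSet_finite hfin).bddAbove ⟨x, hx, y, hy, hxy, rfl⟩

lemma coh_le {n : ℕ} {X : Set (E n)} {c : ℝ} (hc0 : 0 ≤ c)
    (hc : ∀ x ∈ X, ∀ y ∈ X, x ≠ y → |⟪x, y⟫| ≤ c) : coh X ≤ c := by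
  apply Real.sSup_le _ hc0
  rintro r ⟨x, hx, y, hy, hxy, rfl⟩
  exact hc x hx y hy hxy

lemma exists_pair {n : ℕ} {X : Set (E n)} (hfin : X.Finite) (h : 1 < X.ncard) :
    ∃ x ∈ X, ∃ y ∈ X, x ≠ y := by
  rw [Set.one_lt_ncard_iff hfin] at h
  obtain ⟨x, y, hx, hy, hxy⟩ := h
  exact ⟨x, hx, y, hy, hxy⟩

lemma coh_nonneg {n : ℕ} {X : Set (E n)} (hfin : X.Finite) (h : 1 < X.ncard) :
    0 ≤ coh X := by
  obtain ⟨x, hx, y, hy, hxy⟩ := exists_pair hfin h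
  exact le_trans (abs_nonneg _) (pair_le_coh hfin hx hy hxy)

lemma exists_pos_lb {β : Type*} (s : Finset β) (f : β → ℝ) (h : ∀ y ∈ s, 0 < f y) :
    ∃ δ > 0, ∀ y ∈ s, δ ≤ f y := by
  rcases s.eq_empty_or_nonempty with rfl | hs
  · exact ⟨1, one_pos, by simp⟩
  · refine ⟨(s.image f).min' (hs.image f), ?_,
      fun y hy => Finset.min'_le _ _ (Finset.mem_image_of_mem f hy)⟩
    obtain ⟨y, hy, hmin⟩ := Finset.mem_image.mp ((s.image f).min'_mem (hs.image f))
    rw [← hmin]; exact h y hy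

set_option maxHeartbeats 8000000 in
theorem top_eigenvector_in_span_of_neighbors {n m : ℕ} (hn : 0 < n) (hmn : n < m)
    (X : Set (E n)) (hX : Grassmannian m X) (hfin : X.Finite)
    (α : ℝ) (hα : coh X = α)
    (lam : ℝ) (e : E n) (he : ‖e‖ = 1)
    (heig : ∑ x ∈ hfin.toFinset, ⟪x, e⟫ • x = lam • e)
    (hmax : ∀ μ : ℝ, ∀ v : E n, v ≠ 0 →
      (∑ x ∈ hfin.toFinset, ⟪x, v⟫ • x = μ • v) → μ ≤ lam)
    (hbig : ∀ Y : Set (E n), Grassmannian m Y → ∀ hYf : Y.Finite,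
      ∀ μ : ℝ, ∀ v : E n, v ≠ 0 →
        (∑ x ∈ hYf.toFinset, ⟪x, v⟫ • x = μ • v) → μ ≤ lam) :
    ∀ x ∈ X, e ∈ Submodule.span ℝ ({x} ∪ {y | y ∈ X ∧ y ≠ x ∧ |⟪x, y⟫| = α}) := by
  classical
  intro x hx
  by_contra hns
  have hm2 : 1 < m := lt_of_le_of_lt hn hmn
  have hunit : IsUnitSet X := hX.1
  have hxnorm : ‖x‖ = 1 := hunit x hx
  have hcard1 : 1 < X.ncard := by rw [hX.2.2.1]; exact hm2
  have hα0 : 0 ≤ α := hα ▸ coh_nonneg hfin hcard1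
  set N : Set (E n) := {y | y ∈ X ∧ y ≠ x ∧ |⟪x, y⟫| = α} with hN
  set V : Submodule ℝ (E n) := Submodule.span ℝ ({x} ∪ N) with hV
  set p : E n := (V.orthogonalProjectionOnto e : E n) with hp
  set q : E n := e - p with hqdef
  have hpV : p ∈ V := (V.orthogonalProjectionOnto e).2
  have hq0 : q ≠ 0 := by
    intro h
    apply hns
    have hep : e = p := by
      have := sub_eq_zero.mp h; exact this
    rw [hep]; exact hpV
  have hqperp : ∀ v ∈ V, ⟪q, v⟫ = 0 := fun v hv =>
    Submodule.starProjection_inner_eq_zero e v hv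
  have hxV : x ∈ V := Submodule.subset_span (Or.inl rfl)
  have hqx : ⟪q, x⟫ = 0 := hqperp x hxV
  have hxq : ⟪x, q⟫ = 0 := by rw [real_inner_comm]; exact hqx
  have hqN : ∀ y ∈ N, ⟪q, y⟫ = 0 := fun y hy =>
    hqperp y (Submodule.subset_span (Or.inr hy))
  set b : ℝ := ‖q‖ ^ 2 with hb
  have hb0 : 0 < b := by
    have := norm_pos_iff.mpr hq0
    positivity
  have hqe : ⟪q, e⟫ = b := by
    have h1 : ⟪q, p⟫ = 0 := hqperp p hpV
    have h2 : e = q + p := by rw [hqdef]; abel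
    rw [h2, inner_add_right, h1, real_inner_self_eq_norm_sq, add_zero]
  clear_value p q
  set a : ℝ := ⟪x, e⟫ with ha
  have ha1 : |a| ≤ 1 := by
    calc |a| ≤ ‖x‖ * ‖e‖ := abs_real_inner_le_norm x e
    _ = 1 := by rw [hxnorm, he, one_mul]
  -- slack for non-neighbors
  obtain ⟨δ, hδ0, hδ⟩ := exists_pos_lb
    (hfin.toFinset.filter (fun y => y ≠ x ∧ |⟪x, y⟫| ≠ α)) (fun y => α - |⟪x, y⟫|)
    (by
      intro y hy
      rw [Finset.mem_filter, hfin.mem_toFinset] at hy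
      obtain ⟨hyX, hyx, hyα⟩ := hy
      show (0:ℝ) < α - |⟪x, y⟫|
      have hle : |⟪x, y⟫| ≤ α := by
        rw [← hα]; exact pair_le_coh hfin hx hyX (fun h => hyx h.symm)
      have : |⟪x, y⟫| < α := lt_of_le_of_ne hle hyα
      linarith)
  -- minimum distance to other points
  obtain ⟨ρ, hρ0, hρ⟩ := exists_pos_lb
    (hfin.toFinset.filter (fun y => y ≠ x)) (fun y => ‖y - x‖)
    (by
      intro y hy
      rw [Finset.mem_filter, hfin.mem_toFinset] at hy
      show (0:ℝ) < ‖y - x‖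
      rw [norm_pos_iff, sub_ne_zero]
      exact hy.2)
  -- choose the perturbation size
  set ε : ℝ := min 1 (min (δ / (‖q‖ + 1)) (min (ρ / (‖q‖ + b + 1)) (1 / (b + a ^ 2 + 1))))
    with hεdef
  have hq0' : (0:ℝ) < ‖q‖ + 1 := by positivity
  have hε0 : 0 < ε := by
    apply lt_min one_pos
    apply lt_min (by positivity)
    exact lt_min (by positivity) (by positivity)
  have hε1 : ε ≤ 1 := min_le_left _ _
  have hεδ : ε * ‖q‖ < δ := by
    have h1 : ε ≤ δ / (‖q‖ + 1) := le_trans (min_le_right _ _) (min_le_left _ _)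
    have h2 : ε * (‖q‖ + 1) ≤ δ := by
      rw [← le_div_iff₀ hq0']; exact h1
    nlinarith only [h2, hε0]
  have hερ : ε * ‖q‖ + ε * b < ρ := by
    have h1 : ε ≤ ρ / (‖q‖ + b + 1) :=
      le_trans (min_le_right _ _) (le_trans (min_le_right _ _) (min_le_left _ _))
    have h2 : ε * (‖q‖ + b + 1) ≤ ρ := by
      rw [← le_div_iff₀ (by positivity)]; exact h1
    nlinarith only [h2, hε0]
  have hεa : ε * (b + a ^ 2) < 2 := by
    have h1 : ε ≤ 1 / (b + a ^ 2 + 1) :=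
      le_trans (min_le_right _ _) (le_trans (min_le_right _ _) (min_le_right _ _))
    have h2 : ε * (b + a ^ 2 + 1) ≤ 1 := by
      rw [← le_div_iff₀ (by positivity)]; exact h1
    nlinarith only [h2, hε0]
  set s : ℝ := if a = 0 then 1 else a with hs
  have hs0 : s ≠ 0 := by
    rw [hs]; split
    · exact one_ne_zero
    · assumption
  have hsabs : |s| ≤ 1 := by
    rw [hs]; split
    · simp
    · exact ha1
  set t : ℝ := ε * s with ht
  have ht0 : t ≠ 0 := mul_ne_zero hε0.ne' hs0
  have htabs : |t| ≤ ε := by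
    rw [ht, abs_mul, abs_of_pos hε0]
    nlinarith only [hsabs, hε0]
  clear_value a b s t ε
  set u : E n := x + t • q with hu
  have hc2 : ‖u‖ ^ 2 = 1 + t ^ 2 * b := by
    rw [hu, norm_add_sq_real, real_inner_smul_right, hxq, norm_smul, hxnorm,
      Real.norm_eq_abs, mul_pow, sq_abs, hb]
    ring
  set c : ℝ := ‖u‖ with hcdef
  have hcnn : 0 ≤ c := norm_nonneg u
  have hc1 : 1 ≤ c := by nlinarith only [hc2, hcnn, hb0, sq_nonneg t]
  have hc0 : 0 < c := lt_of_lt_of_le one_pos hc1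
  set x' : E n := c⁻¹ • u with hx'
  have hx'norm : ‖x'‖ = 1 := by
    rw [hx', norm_smul, ← hcdef, norm_inv, Real.norm_eq_abs, abs_of_pos hc0,
      inv_mul_cancel₀ hc0.ne']
  have hx'inner : ∀ w : E n, ⟪x', w⟫ = c⁻¹ * (⟪x, w⟫ + t * ⟪q, w⟫) := by
    intro w
    rw [hx', real_inner_smul_left, hu, inner_add_left, real_inner_smul_left]
  have hxmu : ‖x - u‖ = |t| * ‖q‖ := by
    rw [hu]
    have : x - (x + t • q) = -(t • q) := by abel
    rw [this, norm_neg, norm_smul, Real.norm_eq_abs]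
  have humx' : ‖u - x'‖ = c - 1 := by
    rw [hx']
    have : u - c⁻¹ • u = (1 - c⁻¹) • u := by
      rw [sub_smul, one_smul]
    rw [this, norm_smul, ← hcdef, Real.norm_eq_abs]
    rw [abs_of_nonneg (by
      have : c⁻¹ ≤ 1 := by
        rw [inv_le_one_iff₀]; right; exact hc1
      linarith)]
    field_simp
  have hcm1 : c - 1 ≤ t ^ 2 * b := by nlinarith only [hc2, hc1]
  clear_value u c x'
  have hxx' : ‖x - x'‖ < ρ := by
    have h1 : ‖x - x'‖ ≤ ‖x - u‖ + ‖u - x'‖ := by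
      have : x - x' = (x - u) + (u - x') := by abel
      rw [this]; exact norm_add_le _ _
    have ht2 : t ^ 2 ≤ ε := by
      have h := (sq_abs t).symm
      nlinarith only [h, htabs, abs_nonneg t, hε1]
    have hqnn : (0:ℝ) ≤ ‖q‖ := norm_nonneg q
    rw [hxmu, humx'] at h1
    nlinarith only [h1, hcm1, ht2, htabs, hqnn, hb0.le, hερ, hε0, abs_nonneg t]
  have hx'new : x' ∉ X \ {x} := by
    rintro ⟨hyX, hyx⟩
    have hmem : x' ∈ hfin.toFinset.filter (fun y => y ≠ x) := by
      rw [Finset.mem_filter, hfin.mem_toFinset]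
      exact ⟨hyX, hyx⟩
    have := hρ x' hmem
    rw [norm_sub_rev] at hxx'
    linarith
  set Y : Set (E n) := insert x' (X \ {x}) with hY
  have hYfin : Y.Finite := (hfin.diff (t := {x})).insert x'
  have hYunit : IsUnitSet Y := by
    rintro y hy
    rcases hy with rfl | ⟨hyX, _⟩
    · exact hx'norm
    · exact hunit y hyX
  have hYcard : Y.ncard = m := by
    rw [hY, Set.ncard_insert_of_notMem hx'new (hfin.diff (t := {x})),
      Set.ncard_diff_singleton_of_mem hx, hX.2.2.1]
    omega
  have hql : ∀ y : E n, y ∈ X → |⟪q, y⟫| ≤ ‖q‖ := by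
    intro y hyX
    calc |⟪q, y⟫| ≤ ‖q‖ * ‖y‖ := abs_real_inner_le_norm q y
    _ = ‖q‖ := by rw [hunit y hyX, mul_one]
  have hcinv1 : c⁻¹ ≤ 1 := by
    rw [inv_le_one_iff₀]; right; exact hc1
  have hcinv0 : 0 < c⁻¹ := inv_pos.mpr hc0
  have key : ∀ z ∈ X \ {x}, |⟪x', z⟫| ≤ α := by
    rintro z ⟨hzX, hzx⟩
    rw [hx'inner z]
    by_cases hzα : |⟪x, z⟫| = α
    · have hzN : z ∈ N := ⟨hzX, hzx, hzα⟩
      rw [hqN z hzN, mul_zero, add_zero, abs_mul, abs_of_pos hcinv0]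
      rw [hzα]
      nlinarith only [hcinv1, hcinv0, hα0]
    · have hmem : z ∈ hfin.toFinset.filter (fun y => y ≠ x ∧ |⟪x, y⟫| ≠ α) := by
        rw [Finset.mem_filter, hfin.mem_toFinset]
        exact ⟨hzX, hzx, hzα⟩
      have hδz := hδ z hmem
      have h1 : |c⁻¹ * (⟪x, z⟫ + t * ⟪q, z⟫)| ≤ |⟪x, z⟫| + |t| * |⟪q, z⟫| := by
        rw [abs_mul, abs_of_pos hcinv0]
        have h2 : |⟪x, z⟫ + t * ⟪q, z⟫| ≤ |⟪x, z⟫| + |t| * |⟪q, z⟫| := by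
          calc |⟪x, z⟫ + t * ⟪q, z⟫| ≤ |⟪x, z⟫| + |t * ⟪q, z⟫| := abs_add_le _ _
          _ = |⟪x, z⟫| + |t| * |⟪q, z⟫| := by rw [abs_mul]
        nlinarith only [h2, hcinv1, hcinv0, abs_nonneg (⟪x, z⟫ + t * ⟪q, z⟫)]
      have h3 : |t| * |⟪q, z⟫| ≤ ε * ‖q‖ :=
        mul_le_mul htabs (hql z hzX) (abs_nonneg _) hε0.le
      linarith only [h1, h3, hδz, hεδ]
  have hcohY : coh Y ≤ α := by
    apply coh_le hα0
    rintro y hy z hz hyz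
    rcases hy with rfl | hyD
    · rcases hz with rfl | hzD
      · exact absurd rfl hyz
      · exact key z hzD
    · rcases hz with rfl | hzD
      · rw [real_inner_comm]; exact key y hyD
      · rw [← hα]
        exact pair_le_coh hfin hyD.1 hzD.1 hyz
  have hYGrass : Grassmannian m Y := by
    refine ⟨hYunit, hYfin, hYcard, fun Z hZu hZf hZc => ?_⟩
    refine le_trans hcohY ?_
    rw [← hα]
    exact hX.2.2.2 Z hZu hZf hZc
  -- Rayleigh gain
  have hx'e : ⟪x', e⟫ = c⁻¹ * (a + t * b) := by
    rw [hx'inner e, hqe, ← ha]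
  have hgain : a ^ 2 < ⟪x', e⟫ ^ 2 := by
    rw [hx'e]
    have keyq : a ^ 2 * c ^ 2 < (a + t * b) ^ 2 := by
      rw [hc2]
      by_cases haz : a = 0
      · rw [haz]
        have h : t ^ 2 * b ^ 2 > 0 := by positivity
        nlinarith only [h]
      · have hts : t = ε * a := by rw [ht, hs, if_neg haz]
        have ha2 : 0 < a ^ 2 := by positivity
        rw [hts]
        have hQ : 0 < 2 + ε * b - ε * a ^ 2 := by nlinarith only [hεa, mul_pos hε0 hb0]
        have hP : 0 < ε * a ^ 2 * b := mul_pos (mul_pos hε0 ha2) hb0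
        nlinarith only [mul_pos hP hQ]
    have hci2 : (0:ℝ) < (c⁻¹) ^ 2 := by positivity
    calc a ^ 2 = (c⁻¹) ^ 2 * (a ^ 2 * c ^ 2) := by field_simp
    _ < (c⁻¹) ^ 2 * (a + t * b) ^ 2 := mul_lt_mul_of_pos_left keyq hci2
    _ = (c⁻¹ * (a + t * b)) ^ 2 := by ring
  -- sum over Y
  have hxmem : x ∈ hfin.toFinset := hfin.mem_toFinset.mpr hx
  have hx'er : x' ∉ hfin.toFinset.erase x := by
    intro h
    rw [Finset.mem_erase, hfin.mem_toFinset] at h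
    exact hx'new ⟨h.2, h.1⟩
  have hYfinset : hYfin.toFinset = insert x' (hfin.toFinset.erase x) := by
    apply Finset.coe_injective
    simp [hY, Set.Finite.coe_toFinset]
  have hRsum : ∑ z ∈ hYfin.toFinset, ⟪z, e⟫ • z =
      (∑ z ∈ hfin.toFinset, ⟪z, e⟫ • z) - ⟪x, e⟫ • x + ⟪x', e⟫ • x' := by
    rw [hYfinset, Finset.sum_insert hx'er,
      ← Finset.add_sum_erase _ (fun z => ⟪z, e⟫ • z) hxmem]
    abel
  have hRay : ⟪∑ z ∈ hYfin.toFinset, ⟪z, e⟫ • z, e⟫ = lam - a ^ 2 + ⟪x', e⟫ ^ 2 := by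
    rw [hRsum, heig]
    rw [inner_add_left, inner_sub_left, real_inner_smul_left, real_inner_smul_left,
      real_inner_smul_left, real_inner_self_eq_norm_sq, he]
    rw [← ha]
    ring
  obtain ⟨μ, v, hv0, heq, hRb⟩ := exists_top_eigen hn hYfin.toFinset
  have hμlam : μ ≤ lam := hbig Y hYGrass hYfin μ v hv0 heq
  have hlt : lam < μ := by
    have h1 := hRb e
    rw [hRay, he] at h1
    nlinarith only [h1, hgain]
  linarith only [hμlam, hlt]
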